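/- If W1 and W2 are common eigenvectors with equal eigenvalues along a vector ψ (i.e., W1 ψ = λ ψ and W2 ψ = λ ψ for the same λ > 0), then ψ lies in the kernel of the operator F = S^{1/2} log(S^{-1/2} W1 S^{-1/2}) S^{1/2}, where S is the geodesic midpoint of W1 and W2. -/

import Mathlib

open Matrix

noncomputable def msqrt {N : ℕ} (A : Matrix (Fin N) (Fin N) ℝ) : Matrix (Fin N) (Fin N) ℝ :=
  cfc Real.sqrt A

noncomputable def mlog {N : ℕ} (A : Matrix (Fin N) (Fin N) ℝ) : Matrix (Fin N) (Fin N) ℝ :=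
  cfc Real.log A

noncomputable def mexp {N : ℕ} (A : Matrix (Fin N) (Fin N) ℝ) : Matrix (Fin N) (Fin N) ℝ :=
  cfc Real.exp A

noncomputable def mpow {N : ℕ} (p : ℝ) (A : Matrix (Fin N) (Fin N) ℝ) : Matrix (Fin N) (Fin N) ℝ :=
  cfc (fun x : ℝ => x ^ p) A

/-- Midpoint of the affine-invariant geodesic between `W1` and `W2`:
`S = W1^{1/2} (W1^{-1/2} W2 W1^{-1/2})^{1/2} W1^{1/2}`. -/
noncomputable def geoMid {N : ℕ} (W1 W2 : Matrix (Fin N) (Fin N) ℝ) : Matrix (Fin N) (Fin N) ℝ :=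
  msqrt W1 * msqrt ((msqrt W1)⁻¹ * W2 * (msqrt W1)⁻¹) * msqrt W1

/-- Logarithmic map at `S`: `Log_S(W) = S^{1/2} log(S^{-1/2} W S^{-1/2}) S^{1/2}`. -/
noncomputable def logMap {N : ℕ} (S W : Matrix (Fin N) (Fin N) ℝ) : Matrix (Fin N) (Fin N) ℝ :=
  msqrt S * mlog ((msqrt S)⁻¹ * W * (msqrt S)⁻¹) * msqrt S

/-- Exponential map at `S`: `Exp_S(D) = S^{1/2} exp(S^{-1/2} D S^{-1/2}) S^{1/2}`. -/
noncomputable def expMap {N : ℕ} (S D : Matrix (Fin N) (Fin N) ℝ) : Matrix (Fin N) (Fin N) ℝ :=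
  msqrt S * mexp ((msqrt S)⁻¹ * D * (msqrt S)⁻¹) * msqrt S

/-! ### Auxiliary lemmas -/

/-- If `ψ` is an eigenvector of the Hermitian matrix `A` with eigenvalue `μ`, then it is an
eigenvector of `cfc f A` with eigenvalue `f μ`. -/
lemma cfc_mulVec_eig {N : ℕ} {A : Matrix (Fin N) (Fin N) ℝ} (hA : A.IsHermitian)
    (f : ℝ → ℝ) {ψ : Fin N → ℝ} {μ : ℝ} (h : A *ᵥ ψ = μ • ψ) :
    cfc f A *ᵥ ψ = f μ • ψ := by
  rw [hA.cfc_eq, Matrix.IsHermitian.cfc]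
  set U : Matrix (Fin N) (Fin N) ℝ := (hA.eigenvectorUnitary : Matrix (Fin N) (Fin N) ℝ) with hU
  have hsU : star U * U = 1 := Matrix.UnitaryGroup.star_mul_self _
  have hUs : U * star U = 1 := mul_eq_one_comm.mp hsU
  set c : Fin N → ℝ := star U *ᵥ ψ with hc
  have hspec : A = U * diagonal (RCLike.ofReal ∘ hA.eigenvalues) * star U := hA.spectral_theorem
  have hDc : diagonal (RCLike.ofReal ∘ hA.eigenvalues) *ᵥ c = μ • c := by
    have h1 : star U *ᵥ (A *ᵥ ψ) = star U *ᵥ (μ • ψ) := by rw [h]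
    rw [hspec] at h1
    rw [mulVec_mulVec, mulVec_smul] at h1
    simp only [← mul_assoc, hsU, one_mul] at h1
    rw [← mulVec_mulVec] at h1
    exact h1
  have key : ∀ i, hA.eigenvalues i * c i = μ * c i := by
    intro i
    have := congrFun hDc i
    simpa [mulVec_diagonal] using this
  have hfDc : diagonal (RCLike.ofReal ∘ f ∘ hA.eigenvalues) *ᵥ c = f μ • c := by
    funext i
    simp only [mulVec_diagonal, Pi.smul_apply, Function.comp_apply, smul_eq_mul,
      RCLike.ofReal_real_eq_id, id_eq]
    by_cases hci : c i = 0
    · simp [hci]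
    · have : hA.eigenvalues i = μ := mul_right_cancel₀ hci (key i)
      rw [this]
  calc (U * diagonal (RCLike.ofReal ∘ f ∘ hA.eigenvalues) * star U) *ᵥ ψ
      = U *ᵥ (diagonal (RCLike.ofReal ∘ f ∘ hA.eigenvalues) *ᵥ c) := by
        rw [hc, mulVec_mulVec, mulVec_mulVec]
    _ = U *ᵥ (f μ • c) := by rw [hfDc]
    _ = f μ • (U *ᵥ (star U *ᵥ ψ)) := by rw [mulVec_smul]
    _ = f μ • ψ := by rw [mulVec_mulVec, hUs, one_mulVec]

lemma posDef_of_spectrum_pos {N : ℕ} {B : Matrix (Fin N) (Fin N) ℝ} (hB : B.IsHermitian)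
    (h : ∀ μ ∈ spectrum ℝ B, 0 < μ) : B.PosDef := by
  have heig : ∀ i, 0 < hB.eigenvalues i := by
    intro i
    exact h _ (hB.eigenvalues_mem_spectrum_real i)
  have hsemi : B.PosSemidef := hB.posSemidef_iff_eigenvalues_nonneg.mpr fun i => (heig i).le
  refine .of_dotProduct_mulVec_pos hB fun x hx => ?_
  rcases lt_or_eq_of_le (hsemi.dotProduct_mulVec_nonneg x) with hlt | heq
  · exact hlt
  · exfalso
    have hBx : B *ᵥ x = 0 := (hsemi.dotProduct_mulVec_zero_iff x).mp heq.symm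
    have : ¬ IsUnit B := by
      intro hu
      have hinj := Matrix.mulVec_injective_iff_isUnit.mpr hu
      apply hx
      apply hinj
      simpa using hBx
    have h0 : (0 : ℝ) ∈ spectrum ℝ B := (spectrum.zero_mem_iff ℝ).mpr this
    exact lt_irrefl 0 (h 0 h0)

lemma spectrum_pos_of_posDef {N : ℕ} {A : Matrix (Fin N) (Fin N) ℝ} (hA : A.PosDef) :
    ∀ μ ∈ spectrum ℝ A, 0 < μ := by
  rw [hA.1.spectrum_real_eq_range_eigenvalues]
  rintro - ⟨i, rfl⟩
  exact hA.eigenvalues_pos i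

lemma msqrt_isHermitian {N : ℕ} {A : Matrix (Fin N) (Fin N) ℝ} (hA : A.IsHermitian) :
    (msqrt A).IsHermitian := by
  have : IsSelfAdjoint (msqrt A) := cfc_predicate Real.sqrt A
  exact this

lemma msqrt_posDef {N : ℕ} {A : Matrix (Fin N) (Fin N) ℝ} (hA : A.PosDef) :
    (msqrt A).PosDef := by
  refine posDef_of_spectrum_pos (msqrt_isHermitian hA.1) ?_
  have hsa : IsSelfAdjoint A := hA.1
  have hmap : spectrum ℝ (msqrt A) = Real.sqrt '' spectrum ℝ A := by
    exact cfc_map_spectrum Real.sqrt A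
  rw [hmap]
  rintro - ⟨x, hxmem, rfl⟩
  exact Real.sqrt_pos.mpr (spectrum_pos_of_posDef hA x hxmem)

lemma inv_mulVec_eig {N : ℕ} {M : Matrix (Fin N) (Fin N) ℝ} (hM : IsUnit M)
    {ψ : Fin N → ℝ} {c : ℝ} (hc : c ≠ 0) (h : M *ᵥ ψ = c • ψ) :
    M⁻¹ *ᵥ ψ = c⁻¹ • ψ := by
  have hdet : IsUnit M.det := (Matrix.isUnit_iff_isUnit_det M).mp hM
  have h1 : M⁻¹ *ᵥ (M *ᵥ ψ) = ψ := by
    rw [mulVec_mulVec, Matrix.nonsing_inv_mul M hdet, one_mulVec]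
  rw [h, mulVec_smul] at h1
  calc M⁻¹ *ᵥ ψ = c⁻¹ • (c • (M⁻¹ *ᵥ ψ)) := by rw [smul_smul, inv_mul_cancel₀ hc, one_smul]
    _ = c⁻¹ • ψ := by rw [h1]

lemma posDef_conj {N : ℕ} {A B : Matrix (Fin N) (Fin N) ℝ} (hA : A.PosDef) (hB : IsUnit B) :
    (Bᴴ * A * B).PosDef := by
  refine .of_dotProduct_mulVec_pos (Matrix.isHermitian_conjTranspose_mul_mul B hA.1) fun x hx => ?_
  have hBx : B *ᵥ x ≠ 0 := by
    intro h0
    apply hx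
    have hinj := Matrix.mulVec_injective_iff_isUnit.mpr hB
    apply hinj
    simpa using h0
  have := hA.dotProduct_mulVec_pos hBx
  calc (0:ℝ) < star (B *ᵥ x) ⬝ᵥ (A *ᵥ (B *ᵥ x)) := this
    _ = star x ⬝ᵥ ((Bᴴ * A * B) *ᵥ x) := by
        rw [star_mulVec, mulVec_mulVec, ← dotProduct_mulVec, mulVec_mulVec, ← mul_assoc]

/-- a common eigenvector of W1 and W2 with equal eigenvalue λ > 0 lies in the
kernel of F = Log_S(W1), where S is the geodesic midpoint of W1 and W2. -/
theorem stmt_2 {N : ℕ} (W1 W2 : Matrix (Fin N) (Fin N) ℝ)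
    (hW1 : W1.PosDef) (hW2 : W2.PosDef)
    (ψ : Fin N → ℝ) (hψ : ψ ≠ 0) (lam : ℝ) (hlam : 0 < lam)
    (h1 : W1 *ᵥ ψ = lam • ψ) (h2 : W2 *ᵥ ψ = lam • ψ) :
    logMap (geoMid W1 W2) W1 *ᵥ ψ = 0 := by
  set a : Matrix (Fin N) (Fin N) ℝ := msqrt W1 with ha
  have hsl : (0:ℝ) < Real.sqrt lam := Real.sqrt_pos.mpr hlam
  have ha_pd : a.PosDef := msqrt_posDef hW1
  have ha_unit : IsUnit a := ha_pd.isUnit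
  have haψ : a *ᵥ ψ = Real.sqrt lam • ψ := cfc_mulVec_eig hW1.1 Real.sqrt h1
  have hainvψ : a⁻¹ *ᵥ ψ = (Real.sqrt lam)⁻¹ • ψ := inv_mulVec_eig ha_unit hsl.ne' haψ
  set M : Matrix (Fin N) (Fin N) ℝ := a⁻¹ * W2 * a⁻¹ with hMdef
  have hainv_herm : (a⁻¹).IsHermitian := ha_pd.1.inv
  have hM_pd : M.PosDef := by
    have : ((a⁻¹)ᴴ * W2 * a⁻¹).PosDef :=
      posDef_conj hW2 (Matrix.isUnit_nonsing_inv_iff.mpr ha_unit)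
    rwa [hainv_herm.eq] at this
  have hMψ : M *ᵥ ψ = (1:ℝ) • ψ := by
    have : M *ᵥ ψ = a⁻¹ *ᵥ (W2 *ᵥ (a⁻¹ *ᵥ ψ)) := by
      rw [mulVec_mulVec, mulVec_mulVec]
    rw [this, hainvψ, mulVec_smul, h2, mulVec_smul, mulVec_smul, hainvψ, smul_smul, smul_smul]
    congr 1
    rw [eq_comm, ← Real.sqrt_mul_self hlam.le]
    field_simp
    rw [Real.sq_sqrt (Real.sqrt_nonneg _)]
  set B : Matrix (Fin N) (Fin N) ℝ := msqrt M with hBdef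
  have hBψ : B *ᵥ ψ = ψ := by
    have := cfc_mulVec_eig hM_pd.1 Real.sqrt hMψ
    simpa [Real.sqrt_one, hBdef, msqrt] using this
  set S : Matrix (Fin N) (Fin N) ℝ := geoMid W1 W2 with hSdef
  have hSeq : S = aᴴ * B * a := by
    rw [hSdef, geoMid, ha_pd.1.eq]
  have hS_pd : S.PosDef := by
    rw [hSeq]
    exact posDef_conj (msqrt_posDef hM_pd) ha_unit
  have hSψ : S *ᵥ ψ = lam • ψ := by
    rw [hSeq, ha_pd.1.eq]
    have : (a * B * a) *ᵥ ψ = a *ᵥ (B *ᵥ (a *ᵥ ψ)) := by rw [mulVec_mulVec, mulVec_mulVec]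
    rw [this, haψ, mulVec_smul, hBψ, mulVec_smul, haψ, smul_smul,
      Real.mul_self_sqrt hlam.le]
  set b : Matrix (Fin N) (Fin N) ℝ := msqrt S with hbdef
  have hb_pd : b.PosDef := msqrt_posDef hS_pd
  have hbψ : b *ᵥ ψ = Real.sqrt lam • ψ := cfc_mulVec_eig hS_pd.1 Real.sqrt hSψ
  have hbinvψ : b⁻¹ *ᵥ ψ = (Real.sqrt lam)⁻¹ • ψ := inv_mulVec_eig hb_pd.isUnit hsl.ne' hbψ
  set inner : Matrix (Fin N) (Fin N) ℝ := b⁻¹ * W1 * b⁻¹ with hinnerdef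
  have hinner_herm : inner.IsHermitian := by
    have : ((b⁻¹)ᴴ * W1 * b⁻¹).IsHermitian :=
      Matrix.isHermitian_conjTranspose_mul_mul _ hW1.1
    rwa [hb_pd.1.inv.eq] at this
  have hinnerψ : inner *ᵥ ψ = (1:ℝ) • ψ := by
    have : inner *ᵥ ψ = b⁻¹ *ᵥ (W1 *ᵥ (b⁻¹ *ᵥ ψ)) := by rw [mulVec_mulVec, mulVec_mulVec]
    rw [this, hbinvψ, mulVec_smul, h1, mulVec_smul, mulVec_smul, hbinvψ, smul_smul, smul_smul]
    congr 1
    rw [eq_comm, ← Real.sqrt_mul_self hlam.le]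
    field_simp
    rw [Real.sq_sqrt (Real.sqrt_nonneg _)]
  have hlogψ : mlog inner *ᵥ ψ = 0 := by
    have := cfc_mulVec_eig hinner_herm Real.log hinnerψ
    simpa [Real.log_one, mlog] using this
  show (b * mlog inner * b) *ᵥ ψ = 0
  rw [← mulVec_mulVec, ← mulVec_mulVec, hbψ, mulVec_smul, hlogψ, smul_zero, mulVec_zero]
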